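/- Let X be a nonnegative random variable that is almost surely bounded, and suppose E[X^2] ≤ v^2 for some v ≥ 0. Then for every λ ≤ 0, E[exp(λ(X − E[X]))] ≤ exp(v^2 λ^2 / 2); that is, X is v-left-sided-sub-Gaussian. -/

import Mathlib

open MeasureTheory Real

lemma exp_le_quad {t : ℝ} (ht : t ≤ 0) : Real.exp t ≤ 1 + t + t ^ 2 / 2 := by
  have hanti : AntitoneOn (fun t : ℝ => 1 + t + t ^ 2 / 2 - Real.exp t) (Set.Iic 0) := by
    apply antitoneOn_of_deriv_nonpos (convex_Iic 0)
    · fun_prop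
    · fun_prop
    · intro x hx
      have hd : HasDerivAt (fun t : ℝ => 1 + t + t ^ 2 / 2 - Real.exp t)
          (1 + x - Real.exp x) x := by
        have h3 := (((hasDerivAt_id x).const_add 1).add
          ((hasDerivAt_pow 2 x).div_const 2)).sub (Real.hasDerivAt_exp x)
        refine h3.congr_deriv ?_
        simp
      rw [hd.deriv]
      nlinarith [Real.add_one_le_exp x]
  have := hanti (Set.mem_Iic.mpr ht) (Set.mem_Iic.mpr le_rfl) ht
  simp at this
  linarith

theorem lsg_of_second_moment {Ω : Type*} [MeasurableSpace Ω] (P : Measure Ω)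
    [IsProbabilityMeasure P] (X : Ω → ℝ) (hX : Measurable X)
    (M : ℝ) (hM : 0 < M) (h0 : ∀ᵐ ω ∂P, 0 ≤ X ω) (hb : ∀ᵐ ω ∂P, X ω ≤ M)
    (v : ℝ) (hv : 0 ≤ v) (h2 : ∫ ω, (X ω) ^ 2 ∂P ≤ v ^ 2) :
    ∀ l : ℝ, l ≤ 0 →
      ∫ ω, Real.exp (l * (X ω - ∫ ω', X ω' ∂P)) ∂P ≤ Real.exp (v ^ 2 * l ^ 2 / 2) := by
  intro l hl
  set μ := ∫ ω', X ω' ∂P with hμdef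
  -- integrability of X
  have hXi : Integrable X P := by
    refine ⟨hX.aestronglyMeasurable, HasFiniteIntegral.of_bounded (C := M) ?_⟩
    filter_upwards [h0, hb] with ω h1 h2
    rw [Real.norm_eq_abs, abs_of_nonneg h1]; exact h2
  have hX2i : Integrable (fun ω => (X ω) ^ 2) P := by
    refine ⟨(hX.pow_const 2).aestronglyMeasurable,
      HasFiniteIntegral.of_bounded (C := M ^ 2) ?_⟩
    filter_upwards [h0, hb] with ω h1 h2
    rw [Real.norm_eq_abs, abs_of_nonneg (by positivity)]
    exact pow_le_pow_left₀ h1 h2 2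
  have hμ0 : 0 ≤ μ := integral_nonneg_of_ae h0
  -- integrability of exp(l * X)
  have hexpi : Integrable (fun ω => Real.exp (l * X ω)) P := by
    refine ⟨(Real.measurable_exp.comp (hX.const_mul l)).aestronglyMeasurable,
      HasFiniteIntegral.of_bounded (C := 1) ?_⟩
    filter_upwards [h0] with ω h1
    rw [Real.norm_eq_abs, abs_of_nonneg (Real.exp_nonneg _)]
    exact Real.exp_le_one_iff.mpr (mul_nonpos_of_nonpos_of_nonneg hl h1)
  -- pointwise bound
  have hpt : ∀ᵐ ω ∂P, Real.exp (l * X ω) ≤ 1 + l * X ω + l ^ 2 * (X ω) ^ 2 / 2 := by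
    filter_upwards [h0] with ω h1
    have := exp_le_quad (mul_nonpos_of_nonpos_of_nonneg hl h1)
    calc Real.exp (l * X ω) ≤ 1 + l * X ω + (l * X ω) ^ 2 / 2 := this
      _ = 1 + l * X ω + l ^ 2 * (X ω) ^ 2 / 2 := by ring
  have hS0 : (0:ℝ) ≤ ∫ ω, (X ω) ^ 2 ∂P :=
    integral_nonneg (fun ω => by positivity)
  have hmono : ∫ ω, Real.exp (l * X ω) ∂P ≤ 1 + l * μ + l ^ 2 * (∫ ω, (X ω) ^ 2 ∂P) / 2 := by
    have hIa : Integrable (fun ω => 1 + l * X ω) P := by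
      simpa using (integrable_const (1:ℝ)).add (hXi.const_mul l)
    have hIb : Integrable (fun ω => l ^ 2 * (X ω) ^ 2 / 2) P :=
      (hX2i.const_mul (l ^ 2)).div_const 2
    have hrhs : Integrable (fun ω => 1 + l * X ω + l ^ 2 * (X ω) ^ 2 / 2) P := by
      exact hIa.add hIb
    calc ∫ ω, Real.exp (l * X ω) ∂P
        ≤ ∫ ω, (1 + l * X ω + l ^ 2 * (X ω) ^ 2 / 2) ∂P :=
          integral_mono_ae hexpi hrhs hpt
      _ = 1 + l * μ + l ^ 2 * (∫ ω, (X ω) ^ 2 ∂P) / 2 := by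
          rw [integral_add hIa hIb, integral_add (integrable_const 1) (hXi.const_mul l),
            integral_const, integral_div, integral_const_mul, integral_const_mul]
          simp [hμdef]
  have hmgf : ∫ ω, Real.exp (l * X ω) ∂P ≤ Real.exp (l * μ + l ^ 2 * v ^ 2 / 2) := by
    calc ∫ ω, Real.exp (l * X ω) ∂P
        ≤ 1 + l * μ + l ^ 2 * (∫ ω, (X ω) ^ 2 ∂P) / 2 := hmono
      _ ≤ 1 + (l * μ + l ^ 2 * v ^ 2 / 2) := by nlinarith [sq_nonneg l]
      _ ≤ Real.exp (l * μ + l ^ 2 * v ^ 2 / 2) := Real.add_one_le_exp _ |>.trans_eq' (by ring)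
  have hsplit : ∀ ω, Real.exp (l * (X ω - μ)) = Real.exp (-(l * μ)) * Real.exp (l * X ω) := by
    intro ω
    rw [← Real.exp_add]; ring_nf
  calc ∫ ω, Real.exp (l * (X ω - μ)) ∂P
      = Real.exp (-(l * μ)) * ∫ ω, Real.exp (l * X ω) ∂P := by
        simp_rw [hsplit]; rw [integral_const_mul]
    _ ≤ Real.exp (-(l * μ)) * Real.exp (l * μ + l ^ 2 * v ^ 2 / 2) := by
        exact mul_le_mul_of_nonneg_left hmgf (Real.exp_nonneg _)
    _ = Real.exp (v ^ 2 * l ^ 2 / 2) := by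
        rw [← Real.exp_add]; ring_nf
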